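/- arXiv:2209.03435 — 3 statements merged into one kernel-verified Lean document; each statement's English description precedes it below -/
import Mathlib

section
/- Let N ≥ 2 be an integer and let f be a real polynomial of degree at most N with f(0) = f(1) = 0. Then there exist a real number β > 0 and real numbers α_0, α_1, …, α_N with α_0 = 0, α_N = 1, and 0 ≤ α_k ≤ 1 for all 0 ≤ k ≤ N, such that f(u) = β ( ∑_{k=0}^{N} C(N,k) α_k u^k (1−u)^{N−k} − u ) for all real u. -/
set_option maxHeartbeats 1000000

open Finset

lemma bern_key (N j : ℕ) (hj : j ≤ N) (u : ℝ) :
    ∑ k ∈ range (N + 1), (k.choose j : ℝ) * (N.choose k) * u ^ k * (1 - u) ^ (N - k)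
      = (N.choose j : ℝ) * u ^ j := by
  rw [range_eq_Ico, ← Finset.sum_Ico_consecutive _ (Nat.zero_le j) (by omega : j ≤ N + 1)]
  have h1 : ∑ k ∈ Finset.Ico 0 j, (k.choose j : ℝ) * (N.choose k) * u ^ k * (1 - u) ^ (N - k) = 0 := by
    apply Finset.sum_eq_zero
    intro k hk
    simp only [Finset.mem_Ico] at hk
    rw [Nat.choose_eq_zero_of_lt hk.2]
    simp
  rw [h1, zero_add, Finset.sum_Ico_eq_sum_range]
  have h2 : ∀ m ∈ range (N + 1 - j),
      ((j + m).choose j : ℝ) * (N.choose (j + m)) * u ^ (j + m) * (1 - u) ^ (N - (j + m))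
        = (N.choose j : ℝ) * u ^ j * (((N - j).choose m : ℝ) * u ^ m * (1 - u) ^ (N - j - m)) := by
    intro m hm
    simp only [Finset.mem_range] at hm
    have hjm : j + m ≤ N := by omega
    have hc : (N.choose (j + m) : ℝ) * ((j + m).choose j) = (N.choose j) * ((N - j).choose m) := by
      have := Nat.choose_mul (n := N) (Nat.le_add_right j m)
      have h' : j + m - j = m := by omega
      rw [h'] at this
      exact_mod_cast congrArg (Nat.cast (R := ℝ)) this
    have hsub : N - (j + m) = N - j - m := by omega
    rw [pow_add, hsub]
    linear_combination (u ^ j * u ^ m * (1 - u) ^ (N - j - m)) * hc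
  rw [Finset.sum_congr rfl h2, ← Finset.mul_sum]
  have h3 : N + 1 - j = (N - j) + 1 := by omega
  rw [h3]
  have h4 : ∑ m ∈ range ((N - j) + 1), ((N - j).choose m : ℝ) * u ^ m * (1 - u) ^ (N - j - m) = 1 := by
    calc ∑ m ∈ range ((N - j) + 1), ((N - j).choose m : ℝ) * u ^ m * (1 - u) ^ (N - j - m)
        = ∑ m ∈ range ((N - j) + 1), u ^ m * (1 - u) ^ (N - j - m) * ((N - j).choose m : ℝ) := by
          apply Finset.sum_congr rfl; intros; ring
      _ = (u + (1 - u)) ^ (N - j) := (add_pow u (1 - u) (N - j)).symm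
      _ = 1 := by norm_num
  rw [h4, mul_one]

/-- Every real polynomial `f` of degree at most `N ≥ 2` with `f(0) = f(1) = 0` admits a
random outcome voting model representation: there exist `β > 0` and voting probabilities
`α_0 = 0 ≤ α_k ≤ 1 = α_N` such that
`f(u) = β ( ∑_{k=0}^{N} C(N,k) α_k u^k (1−u)^{N−k} − u )` for all real `u`. -/
theorem random_outcome_voting_representation (N : ℕ) (hN : 2 ≤ N)
    (f : Polynomial ℝ) (hf : f.natDegree ≤ N)
    (hf0 : f.eval 0 = 0) (hf1 : f.eval 1 = 0) :
    ∃ β : ℝ, 0 < β ∧ ∃ α : ℕ → ℝ,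
      α 0 = 0 ∧ α N = 1 ∧ (∀ k ≤ N, 0 ≤ α k ∧ α k ≤ 1) ∧
      ∀ u : ℝ, f.eval u =
        β * ((∑ k ∈ Finset.range (N + 1),
          (N.choose k : ℝ) * α k * u ^ k * (1 - u) ^ (N - k)) - u) := by
  have hN0 : (0:ℝ) < N := by positivity
  set c : ℕ → ℝ := fun k => ∑ j ∈ range (N + 1), f.coeff j * (k.choose j : ℝ) / (N.choose j)
    with hcdef
  -- representation of f in the Bernstein basis
  have hrep : ∀ u : ℝ, f.eval u
      = ∑ k ∈ range (N + 1), c k * (N.choose k : ℝ) * u ^ k * (1 - u) ^ (N - k) := by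
    intro u
    have he : f.eval u = ∑ j ∈ range (N + 1), f.coeff j * u ^ j :=
      Polynomial.eval_eq_sum_range' (lt_of_le_of_lt hf (Nat.lt_succ_self N)) u
    rw [he]
    have hterm : ∀ j ∈ range (N + 1), f.coeff j * u ^ j
        = ∑ k ∈ range (N + 1),
            (f.coeff j * (k.choose j : ℝ) / (N.choose j)) *
              ((N.choose k : ℝ) * u ^ k * (1 - u) ^ (N - k)) := by
      intro j hj
      simp only [mem_range] at hj
      have hj' : j ≤ N := by omega
      have hc0 : (N.choose j : ℝ) ≠ 0 := by
        exact_mod_cast (Nat.choose_pos hj').ne'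
      have hb := bern_key N j hj' u
      calc f.coeff j * u ^ j
          = f.coeff j / (N.choose j) * ((N.choose j : ℝ) * u ^ j) := by
            field_simp
        _ = f.coeff j / (N.choose j) *
              ∑ k ∈ range (N + 1), (k.choose j : ℝ) * (N.choose k) * u ^ k * (1 - u) ^ (N - k) := by
            rw [hb]
        _ = ∑ k ∈ range (N + 1),
              (f.coeff j * (k.choose j : ℝ) / (N.choose j)) *
                ((N.choose k : ℝ) * u ^ k * (1 - u) ^ (N - k)) := by
            rw [Finset.mul_sum]; apply Finset.sum_congr rfl; intros; ring
    rw [Finset.sum_congr rfl hterm, Finset.sum_comm]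
    apply Finset.sum_congr rfl
    intro k _
    rw [← Finset.sum_mul, hcdef]
    ring
  have hc0 : c 0 = 0 := by
    have : c 0 = ∑ j ∈ range (N + 1), f.coeff j * ((0:ℕ).choose j : ℝ) / (N.choose j) := rfl
    rw [this, Finset.sum_eq_single 0]
    · simpa [Polynomial.coeff_zero_eq_eval_zero] using hf0
    · intro j _ hj
      rw [Nat.choose_eq_zero_of_lt (Nat.pos_of_ne_zero hj)]
      simp
    · simp
  have hcN : c N = 0 := by
    rw [hcdef]
    simp only
    have : ∀ j ∈ range (N + 1), f.coeff j * (N.choose j : ℝ) / (N.choose j) = f.coeff j := by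
      intro j hj
      simp only [mem_range] at hj
      have hc0 : (N.choose j : ℝ) ≠ 0 := by
        exact_mod_cast (Nat.choose_pos (by omega : j ≤ N)).ne'
      field_simp
    rw [Finset.sum_congr rfl this]
    have := Polynomial.eval_eq_sum_range' (lt_of_le_of_lt hf (Nat.lt_succ_self N)) (1:ℝ)
    simp only [one_pow, mul_one] at this
    rw [← this, hf1]
  set β : ℝ := 1 + N * ∑ k ∈ range (N + 1), |c k| with hβdef
  have hβ : 0 < β := by
    have : 0 ≤ ∑ k ∈ range (N + 1), |c k| := Finset.sum_nonneg fun k _ => abs_nonneg _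
    nlinarith
  have hβk : ∀ k ≤ N, (N : ℝ) * |c k| ≤ β := by
    intro k hk
    have h1 : |c k| ≤ ∑ j ∈ range (N + 1), |c j| :=
      Finset.single_le_sum (f := fun j => |c j|) (fun j _ => abs_nonneg _) (Finset.mem_range.mpr (Nat.lt_succ_of_le hk))
    nlinarith
  refine ⟨β, hβ, fun k => c k / β + (k : ℝ) / N, ?_, ?_, ?_, ?_⟩
  · simp [hc0]
  · simp only [hcN]
    field_simp
    simp
  · intro k hk
    rcases Nat.eq_zero_or_pos k with rfl | hk1
    · simp [hc0]
    rcases eq_or_lt_of_le hk with rfl | hkN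
    · simp only [hcN]
      constructor
      · positivity
      · rw [zero_div, zero_add, div_self hN0.ne']
    -- 1 ≤ k ≤ N - 1
    have habs : |c k| / β ≤ 1 / N := by
      rw [div_le_div_iff₀ hβ hN0]
      have := hβk k hk
      nlinarith
    have hck1 : -(1 / N) ≤ c k / β := by
      calc -(1 / N) ≤ -(|c k| / β) := by linarith
        _ = -(|c k|) / β := by rw [neg_div]
        _ ≤ c k / β := div_le_div_of_nonneg_right (neg_abs_le (c k)) hβ.le
    have hck2 : c k / β ≤ 1 / N := le_trans
      (div_le_div_of_nonneg_right (le_abs_self (c k)) hβ.le) habs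
    have hk1' : (1 : ℝ) ≤ k := by exact_mod_cast hk1
    have hkN' : (k : ℝ) ≤ N - 1 := by
      have : (k : ℝ) + 1 ≤ N := by exact_mod_cast hkN
      linarith
    constructor
    · have h1 : (1 : ℝ) / N ≤ k / N := div_le_div_of_nonneg_right hk1' hN0.le
      linarith
    · have h1 : (k : ℝ) / N ≤ (N - 1) / N := div_le_div_of_nonneg_right hkN' hN0.le
      have h2 : ((N : ℝ) - 1) / N = 1 - 1 / N := by field_simp
      linarith
  · intro u
    rw [hrep u]
    have hb1 : ∑ k ∈ range (N + 1), (k : ℝ) * (N.choose k) * u ^ k * (1 - u) ^ (N - k)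
        = N * u := by
      have h := bern_key N 1 (by omega) u
      simp only [Nat.choose_one_right, pow_one] at h
      exact h
    have hsplit : ∑ k ∈ range (N + 1),
        (N.choose k : ℝ) * (c k / β + (k : ℝ) / N) * u ^ k * (1 - u) ^ (N - k)
        = (∑ k ∈ range (N + 1), c k * (N.choose k : ℝ) * u ^ k * (1 - u) ^ (N - k)) / β
          + (∑ k ∈ range (N + 1), (k : ℝ) * (N.choose k) * u ^ k * (1 - u) ^ (N - k)) / N := by
      rw [Finset.sum_div, Finset.sum_div, ← Finset.sum_add_distrib]
      apply Finset.sum_congr rfl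
      intro k _
      field_simp
    rw [hsplit, hb1]
    field_simp
    ring
end

section
/- Let N ≥ 2 be an integer, let f be a real polynomial of degree at most N with f(0) = f(1) = 0, and let b_0, …, b_N be its coefficients in the Bernstein basis, i.e. f(u) = ∑_{k=0}^{N} b_k C(N,k) u^k (1−u)^{N−k}. Then b_0 = b_N = 0, and for every real β > 0 with β ≥ N · max_{0 ≤ k ≤ N} |b_k|, the numbers α_k := k/N + b_k/β satisfy α_0 = 0, α_N = 1, 0 ≤ α_k ≤ 1 for all k, and f(u) = β ( ∑_{k=0}^{N} C(N,k) α_k u^k (1−u)^{N−k} − u ) for all real u. -/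
lemma bern_sum_eval (N : ℕ) (u : ℝ) :
    ∑ k ∈ Finset.range (N + 1),
      (k : ℝ) * ((N.choose k : ℝ) * u ^ k * (1 - u) ^ (N - k)) = N * u := by
  have h := congrArg (Polynomial.eval u) (bernsteinPolynomial.sum_smul ℝ N)
  simp only [Polynomial.eval_finset_sum, bernsteinPolynomial, Polynomial.eval_smul,
    Polynomial.eval_mul, Polynomial.eval_pow, Polynomial.eval_sub, Polynomial.eval_one,
    Polynomial.eval_X, nsmul_eq_mul, Polynomial.eval_natCast] at h
  rw [← h]

/-- Quantitative construction of the voting probabilities: if `f` is a real polynomial of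
degree at most `N ≥ 2` with `f(0) = f(1) = 0` and Bernstein coefficients `b_0, …, b_N`,
then `b_0 = b_N = 0`, and for every `β > 0` with `β ≥ N · max_k |b_k|` the numbers
`α_k = k/N + b_k/β` satisfy `α_0 = 0`, `α_N = 1`, `0 ≤ α_k ≤ 1`, and
`f(u) = β ( ∑_{k=0}^{N} C(N,k) α_k u^k (1−u)^{N−k} − u )` for all real `u`. -/
theorem voting_probabilities_construction (N : ℕ) (hN : 2 ≤ N)
    (f : Polynomial ℝ) (hf : f.natDegree ≤ N)
    (hf0 : f.eval 0 = 0) (hf1 : f.eval 1 = 0) (b : ℕ → ℝ)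
    (hb : ∀ u : ℝ, f.eval u =
      ∑ k ∈ Finset.range (N + 1),
        b k * (N.choose k : ℝ) * u ^ k * (1 - u) ^ (N - k)) :
    b 0 = 0 ∧ b N = 0 ∧
    ∀ β : ℝ, 0 < β →
      (N : ℝ) * ((Finset.range (N + 1)).sup' Finset.nonempty_range_add_one
          fun k => |b k|) ≤ β →
      ∀ α : ℕ → ℝ, (∀ k, α k = (k : ℝ) / (N : ℝ) + b k / β) →
        α 0 = 0 ∧ α N = 1 ∧ (∀ k ≤ N, 0 ≤ α k ∧ α k ≤ 1) ∧
        ∀ u : ℝ, f.eval u =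
          β * ((∑ k ∈ Finset.range (N + 1),
            (N.choose k : ℝ) * α k * u ^ k * (1 - u) ^ (N - k)) - u) := by
  have hNpos : (0 : ℝ) < N := by positivity
  have hb0 : b 0 = 0 := by
    have h := hb 0
    rw [hf0, Finset.sum_eq_single_of_mem 0 (Finset.mem_range.2 (Nat.succ_pos N))] at h
    · simpa using h.symm
    · intro k _ hk
      simp [zero_pow hk]
  have hbN : b N = 0 := by
    have h := hb 1
    rw [hf1, Finset.sum_eq_single_of_mem N (Finset.self_mem_range_succ N)] at h
    · simpa using h.symm
    · intro k hk hkN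
      have : N - k ≠ 0 := Nat.sub_ne_zero_of_lt
        (lt_of_le_of_ne (Nat.lt_succ_iff.1 (Finset.mem_range.1 hk)) hkN)
      simp [zero_pow this]
  refine ⟨hb0, hbN, ?_⟩
  intro β hβ hβ' α hα
  have hbound : ∀ k ≤ N, |b k| * N ≤ β := by
    intro k hk
    have h1 : |b k| ≤ (Finset.range (N + 1)).sup' Finset.nonempty_range_add_one
        fun k => |b k| :=
      Finset.le_sup' (fun k => |b k|) (Finset.mem_range.2 (Nat.lt_succ_of_le hk))
    nlinarith
  have hα0 : α 0 = 0 := by simp [hα 0, hb0]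
  have hαN : α N = 1 := by
    rw [hα N, hbN]
    field_simp
    ring
  refine ⟨hα0, hαN, ?_, ?_⟩
  · intro k hk
    rcases Nat.eq_zero_or_pos k with rfl | hk1
    · simp [hα0]
    rcases eq_or_lt_of_le hk with rfl | hkN
    · simp [hαN]
    have h2 : |b k / β| ≤ 1 / N := by
      rw [abs_div, abs_of_pos hβ, div_le_div_iff₀ hβ hNpos]
      linarith [hbound k hk]
    have h3 := abs_le.1 h2
    have hk1' : (1 : ℝ) ≤ k := by exact_mod_cast hk1
    have hkN' : (k : ℝ) ≤ (N : ℝ) - 1 := by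
      have : (k : ℝ) + 1 ≤ N := by exact_mod_cast hkN
      linarith
    rw [hα k]
    constructor
    · have h4 : (1 : ℝ) / N ≤ (k : ℝ) / N := by gcongr
      linarith
    · have h4 : (k : ℝ) / N ≤ ((N : ℝ) - 1) / N := by gcongr
      have h5 : ((N : ℝ) - 1) / N + 1 / N = 1 := by field_simp; ring
      linarith
  · intro u
    have hsplit : ∑ k ∈ Finset.range (N + 1),
        (N.choose k : ℝ) * α k * u ^ k * (1 - u) ^ (N - k)
        = (∑ k ∈ Finset.range (N + 1),
            (k : ℝ) / N * ((N.choose k : ℝ) * u ^ k * (1 - u) ^ (N - k)))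
          + (1 / β) * ∑ k ∈ Finset.range (N + 1),
            b k * (N.choose k : ℝ) * u ^ k * (1 - u) ^ (N - k) := by
      rw [Finset.mul_sum, ← Finset.sum_add_distrib]
      apply Finset.sum_congr rfl
      intro k _
      rw [hα k]
      field_simp
    have hmean : ∑ k ∈ Finset.range (N + 1),
        (k : ℝ) / N * ((N.choose k : ℝ) * u ^ k * (1 - u) ^ (N - k)) = u := by
      have h := bern_sum_eval N u
      have heq : ∑ k ∈ Finset.range (N + 1),
          (k : ℝ) / N * ((N.choose k : ℝ) * u ^ k * (1 - u) ^ (N - k))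
          = (1 / N) * ∑ k ∈ Finset.range (N + 1),
            (k : ℝ) * ((N.choose k : ℝ) * u ^ k * (1 - u) ^ (N - k)) := by
        rw [Finset.mul_sum]
        apply Finset.sum_congr rfl
        intro k _
        ring
      rw [heq, h]
      field_simp
    rw [hsplit, hmean, ← hb u]
    field_simp
    ring
end

section
/- Let N ≥ 2 be an integer and let f be a real polynomial of degree at most N with f(0) = f(1) = 0. Then there exist a real number β > 0 and nonnegative real numbers ζ_1, …, ζ_N with ∑_{j=1}^{N} ζ_j = 1 such that f(u) = β ( ∑_{j=1}^{N} ζ_j ∑_{k=j}^{N} C(N,k) u^k (1−u)^{N−k} − u ) for all real u. -/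
open Finset

private lemma binom_sum_one (M : ℕ) (u : ℝ) :
    ∑ m ∈ range (M + 1), (M.choose m : ℝ) * u ^ m * (1 - u) ^ (M - m) = 1 := by
  have h := add_pow u (1 - u) M
  simp only [add_sub_cancel, one_pow] at h
  calc ∑ m ∈ range (M + 1), (M.choose m : ℝ) * u ^ m * (1 - u) ^ (M - m)
      = ∑ m ∈ range (M + 1), u ^ m * (1 - u) ^ (M - m) * (M.choose m : ℝ) := by
        apply Finset.sum_congr rfl; intro m _; ring
    _ = 1 := h.symm

private lemma monomial_eq_bernstein (N i : ℕ) (hi : i ≤ N) (u : ℝ) :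
    ∑ k ∈ Icc i N, ((k.choose i : ℝ) / (N.choose i : ℝ)) *
      ((N.choose k : ℝ) * u ^ k * (1 - u) ^ (N - k)) = u ^ i := by
  have hNi : (N.choose i : ℝ) ≠ 0 := by
    exact_mod_cast (Nat.choose_pos hi).ne'
  have step : ∀ k ∈ Icc i N,
      ((k.choose i : ℝ) / (N.choose i : ℝ)) * ((N.choose k : ℝ) * u ^ k * (1 - u) ^ (N - k))
        = ((N - i).choose (k - i) : ℝ) * u ^ k * (1 - u) ^ (N - k) := by
    intro k hk
    rw [mem_Icc] at hk
    have hid : (N.choose k : ℝ) * (k.choose i : ℝ) = (N.choose i : ℝ) * ((N - i).choose (k - i) : ℝ) := by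
      exact_mod_cast congrArg (Nat.cast : ℕ → ℝ) (Nat.choose_mul hk.1)
    field_simp
    linear_combination (u ^ k * (1 - u) ^ (N - k)) * hid
  rw [Finset.sum_congr rfl step]
  have hre : ∑ k ∈ Icc i N, ((N - i).choose (k - i) : ℝ) * u ^ k * (1 - u) ^ (N - k)
      = ∑ m ∈ range (N - i + 1), ((N - i).choose m : ℝ) * u ^ (i + m) * (1 - u) ^ ((N - i) - m) := by
    rw [Finset.sum_bij' (fun k _ => k - i) (fun m _ => i + m)]
    · intro k hk; rw [mem_Icc] at hk; rw [mem_range]; omega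
    · intro m hm; rw [mem_range] at hm; rw [mem_Icc]; omega
    · intro k hk; rw [mem_Icc] at hk; omega
    · intro m hm; omega
    · intro k hk; rw [mem_Icc] at hk
      rw [show i + (k - i) = k from by omega, show N - i - (k - i) = N - k from by omega]
  rw [hre]
  have : ∀ m ∈ range (N - i + 1),
      ((N - i).choose m : ℝ) * u ^ (i + m) * (1 - u) ^ ((N - i) - m)
        = u ^ i * (((N - i).choose m : ℝ) * u ^ m * (1 - u) ^ ((N - i) - m)) := by
    intro m _; rw [pow_add]; ring
  rw [Finset.sum_congr rfl this, ← Finset.mul_sum, binom_sum_one, mul_one]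

/-- Every real polynomial `f` of degree at most `N ≥ 2` with `f(0) = f(1) = 0` admits a
random threshold voting model representation: there exist `β > 0` and threshold
probabilities `ζ_1, …, ζ_N ≥ 0` summing to one such that
`f(u) = β ( ∑_{j=1}^{N} ζ_j ∑_{k=j}^{N} C(N,k) u^k (1−u)^{N−k} − u )` for all real `u`. -/
theorem random_threshold_voting_representation (N : ℕ) (hN : 2 ≤ N)
    (f : Polynomial ℝ) (hf : f.natDegree ≤ N)
    (hf0 : f.eval 0 = 0) (hf1 : f.eval 1 = 0) :
    ∃ β : ℝ, 0 < β ∧ ∃ ζ : ℕ → ℝ,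
      (∀ j ∈ Finset.Icc 1 N, 0 ≤ ζ j) ∧ (∑ j ∈ Finset.Icc 1 N, ζ j = 1) ∧
      ∀ u : ℝ, f.eval u =
        β * ((∑ j ∈ Finset.Icc 1 N, ζ j *
          ∑ k ∈ Finset.Icc j N, (N.choose k : ℝ) * u ^ k * (1 - u) ^ (N - k)) - u) := by
  -- Bernstein basis functions
  set b : ℕ → ℝ → ℝ := fun k u => (N.choose k : ℝ) * u ^ k * (1 - u) ^ (N - k) with hb
  -- Bernstein coefficients of f
  set a : ℕ → ℝ := fun k => ∑ i ∈ range (k + 1),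
    ((k.choose i : ℝ) / (N.choose i : ℝ)) * f.coeff i with ha
  -- a 0 = 0
  have ha0 : a 0 = 0 := by
    have : f.coeff 0 = 0 := by rwa [Polynomial.coeff_zero_eq_eval_zero]
    simp [ha, this]
  -- a N = 0
  have haN : a N = 0 := by
    have h1 : a N = ∑ i ∈ range (N + 1), f.coeff i := by
      apply Finset.sum_congr rfl
      intro i hi
      rw [mem_range] at hi
      have : (N.choose i : ℝ) ≠ 0 := by
        exact_mod_cast (Nat.choose_pos (by omega)).ne'
      field_simp
    have h2 : f.eval 1 = ∑ i ∈ range (N + 1), f.coeff i := by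
      rw [Polynomial.eval_eq_sum_range' (lt_of_le_of_lt hf (Nat.lt_succ_self N))]
      simp
    rw [h1, ← h2, hf1]
  -- f(u) = ∑_{k∈range(N+1)} a k * b k u
  have key : ∀ u : ℝ, ∑ k ∈ range (N + 1), a k * b k u = f.eval u := by
    intro u
    have expand : ∑ k ∈ range (N + 1), a k * b k u
        = ∑ k ∈ range (N + 1), ∑ i ∈ range (k + 1),
            (((k.choose i : ℝ) / (N.choose i : ℝ)) * f.coeff i) * b k u := by
      apply Finset.sum_congr rfl; intro k _; rw [ha, Finset.sum_mul]
    rw [expand]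
    have swap : ∑ k ∈ range (N + 1), ∑ i ∈ range (k + 1),
          (((k.choose i : ℝ) / (N.choose i : ℝ)) * f.coeff i) * b k u
        = ∑ i ∈ range (N + 1), ∑ k ∈ Icc i N,
          (((k.choose i : ℝ) / (N.choose i : ℝ)) * f.coeff i) * b k u := by
      apply Finset.sum_comm'
      intro k i
      simp only [mem_range, mem_Icc]
      omega
    rw [swap]
    have inner : ∀ i ∈ range (N + 1), ∑ k ∈ Icc i N,
        (((k.choose i : ℝ) / (N.choose i : ℝ)) * f.coeff i) * b k u
          = f.coeff i * u ^ i := by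
      intro i hi
      rw [mem_range] at hi
      have := monomial_eq_bernstein N i (by omega) u
      calc ∑ k ∈ Icc i N, (((k.choose i : ℝ) / (N.choose i : ℝ)) * f.coeff i) * b k u
          = f.coeff i * ∑ k ∈ Icc i N, ((k.choose i : ℝ) / (N.choose i : ℝ)) * b k u := by
            rw [Finset.mul_sum]; apply Finset.sum_congr rfl; intro k _; ring
        _ = f.coeff i * u ^ i := by rw [hb]; rw [this]
    rw [Finset.sum_congr rfl inner]
    rw [Polynomial.eval_eq_sum_range' (lt_of_le_of_lt hf (Nat.lt_succ_self N))]
  -- ∑_{j=1}^N g_j(u) = N u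
  have gsum : ∀ u : ℝ, ∑ j ∈ Icc 1 N, (∑ k ∈ Icc j N, b k u) = N * u := by
    intro u
    have swap : ∑ j ∈ Icc 1 N, ∑ k ∈ Icc j N, b k u
        = ∑ k ∈ Icc 1 N, ∑ j ∈ Icc 1 k, b k u := by
      apply Finset.sum_comm'
      intro j k
      simp only [mem_Icc]
      omega
    rw [swap]
    have card : ∀ k ∈ Icc 1 N, ∑ j ∈ Icc 1 k, b k u = (k : ℝ) * b k u := by
      intro k _
      rw [Finset.sum_const, Nat.card_Icc]
      simp [nsmul_eq_mul]
    rw [Finset.sum_congr rfl card]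
    have reindex : ∑ k ∈ Icc 1 N, (k : ℝ) * b k u
        = ∑ m ∈ range N, ((m + 1 : ℕ) : ℝ) * b (m + 1) u := by
      rw [Finset.sum_bij' (fun k _ => k - 1) (fun m _ => m + 1)]
      · intro k hk; rw [mem_Icc] at hk; rw [mem_range]; omega
      · intro m hm; rw [mem_range] at hm; rw [mem_Icc]; omega
      · intro k hk; rw [mem_Icc] at hk; omega
      · intro m _; omega
      · intro k hk; rw [mem_Icc] at hk
        rw [show k - 1 + 1 = k from by omega]
    rw [reindex]
    have term : ∀ m ∈ range N, ((m + 1 : ℕ) : ℝ) * b (m + 1) u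
        = (N : ℝ) * u * (((N - 1).choose m : ℝ) * u ^ m * (1 - u) ^ ((N - 1) - m)) := by
      intro m hm
      rw [mem_range] at hm
      have hid : (m + 1) * (N.choose (m + 1)) = N * ((N - 1).choose m) := by
        have h := Nat.add_one_mul_choose_eq (N - 1) m
        rw [show N - 1 + 1 = N from by omega] at h
        rw [h, Nat.mul_comm]
      have hidR : ((m + 1 : ℕ) : ℝ) * (N.choose (m + 1) : ℝ) = (N : ℝ) * ((N - 1).choose m : ℝ) := by
        exact_mod_cast congrArg (Nat.cast : ℕ → ℝ) hid
      have hexp : N - (m + 1) = (N - 1) - m := by omega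
      simp only [hb]
      rw [hexp, pow_succ']
      linear_combination (u * u ^ m * (1 - u) ^ ((N - 1) - m)) * hidR
    rw [Finset.sum_congr rfl term, ← Finset.mul_sum]
    have : range N = range ((N - 1) + 1) := by congr 1; omega
    rw [this, binom_sum_one]
    ring
  -- choose β and ζ
  set S : ℝ := ∑ j ∈ Icc 1 N, |a j - a (j - 1)| with hS
  have hSnn : 0 ≤ S := Finset.sum_nonneg fun j _ => abs_nonneg _
  set β : ℝ := 1 + N * S with hβ
  have hβpos : 0 < β := by
    have : (0:ℝ) ≤ N * S := mul_nonneg (by positivity) hSnn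
    linarith
  refine ⟨β, hβpos, fun j => 1 / N + (a j - a (j - 1)) / β, ?_, ?_, ?_⟩
  · -- nonnegativity
    intro j hj
    have habs : |a j - a (j - 1)| ≤ S := by
      apply Finset.single_le_sum (fun i _ => abs_nonneg _) hj
    have hNpos : (0:ℝ) < N := by exact_mod_cast (by omega : 0 < N)
    have h1 : (a j - a (j - 1)) / β ≥ -(1 / N) := by
      rw [ge_iff_le, neg_le, ← neg_div]
      rw [div_le_div_iff₀ hβpos hNpos]
      have : -(a j - a (j-1)) ≤ |a j - a (j-1)| := neg_le_abs _
      nlinarith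
    linarith
  · -- sum to one
    have htel : ∑ j ∈ Icc 1 N, (a j - a (j - 1)) = a N - a 0 := by
      have : ∑ j ∈ Icc 1 N, (a j - a (j - 1)) = ∑ m ∈ range N, (a (m + 1) - a m) := by
        rw [Finset.sum_bij' (fun k _ => k - 1) (fun m _ => m + 1)]
        · intro k hk; rw [mem_Icc] at hk; rw [mem_range]; omega
        · intro m hm; rw [mem_range] at hm; rw [mem_Icc]; omega
        · intro k hk; rw [mem_Icc] at hk; omega
        · intro m _; omega
        · intro k hk; rw [mem_Icc] at hk
          rw [show k - 1 + 1 = k from by omega]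
      rw [this, Finset.sum_range_sub]
    rw [Finset.sum_add_distrib, Finset.sum_const, Nat.card_Icc]
    have hNne : (N : ℝ) ≠ 0 := by exact_mod_cast (by omega : N ≠ 0)
    rw [← Finset.sum_div, htel, ha0, haN]
    simp [hNne]
  · -- the identity
    intro u
    have expand : ∑ j ∈ Icc 1 N, (1 / N + (a j - a (j - 1)) / β) *
          ∑ k ∈ Icc j N, (N.choose k : ℝ) * u ^ k * (1 - u) ^ (N - k)
        = (1 / N) * (∑ j ∈ Icc 1 N, ∑ k ∈ Icc j N, b k u)
          + (1 / β) * ∑ j ∈ Icc 1 N, (a j - a (j - 1)) * ∑ k ∈ Icc j N, b k u := by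
      rw [Finset.mul_sum, Finset.mul_sum, ← Finset.sum_add_distrib]
      apply Finset.sum_congr rfl
      intro j _
      rw [hb]
      ring
    -- ∑ c_j g_j = ∑_{k=1}^N a_k b_k = f.eval u
    have cmain : ∑ j ∈ Icc 1 N, (a j - a (j - 1)) * ∑ k ∈ Icc j N, b k u = f.eval u := by
      have swap : ∑ j ∈ Icc 1 N, ∑ k ∈ Icc j N, (a j - a (j - 1)) * b k u
          = ∑ k ∈ Icc 1 N, ∑ j ∈ Icc 1 k, (a j - a (j - 1)) * b k u := by
        apply Finset.sum_comm'
        intro j k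
        simp only [mem_Icc]
        omega
      have step1 : ∑ j ∈ Icc 1 N, (a j - a (j - 1)) * ∑ k ∈ Icc j N, b k u
          = ∑ j ∈ Icc 1 N, ∑ k ∈ Icc j N, (a j - a (j - 1)) * b k u := by
        apply Finset.sum_congr rfl; intro j _; rw [Finset.mul_sum]
      rw [step1, swap]
      have inner : ∀ k ∈ Icc 1 N, ∑ j ∈ Icc 1 k, (a j - a (j - 1)) * b k u = a k * b k u := by
        intro k hk
        rw [mem_Icc] at hk
        rw [← Finset.sum_mul]
        congr 1
        have : ∑ j ∈ Icc 1 k, (a j - a (j - 1)) = ∑ m ∈ range k, (a (m + 1) - a m) := by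
          rw [Finset.sum_bij' (fun j _ => j - 1) (fun m _ => m + 1)]
          · intro j hj; rw [mem_Icc] at hj; rw [mem_range]; omega
          · intro m hm; rw [mem_range] at hm; rw [mem_Icc]; omega
          · intro j hj; rw [mem_Icc] at hj; omega
          · intro m _; omega
          · intro j hj; rw [mem_Icc] at hj
            rw [show j - 1 + 1 = j from by omega]
        rw [this, Finset.sum_range_sub, ha0, sub_zero]
      rw [Finset.sum_congr rfl inner]
      have hIcc : Icc 1 N = (range (N + 1)).erase 0 := by
        ext x; simp only [mem_Icc, mem_erase, mem_range]; omega
      have : ∑ k ∈ range (N + 1), a k * b k u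
          = a 0 * b 0 u + ∑ k ∈ (range (N + 1)).erase 0, a k * b k u := by
        exact (Finset.add_sum_erase _ _ (by simp : 0 ∈ range (N + 1))).symm
      rw [hIcc, ← key u] at *
      rw [this, ha0]
      ring
    rw [expand, gsum u, cmain]
    have hNne : (N : ℝ) ≠ 0 := by exact_mod_cast (by omega : N ≠ 0)
    field_simp
    ring
end
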